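/- Let 1 < p < ∞, let ω be a weight on the upper half-plane 𝓗 belonging to the Békollé–Bonami class B_p, and let μ be a positive Borel measure on 𝓗. Then there is a constant C > 0, depending only on p and [ω]_{B_p}, such that for every z ∈ 𝓗, K_μ(z) ≤ C (K^0_{d,μ}(z) + K^{1/3}_{d,μ}(z)). -/

import Mathlib

open MeasureTheory Set
open scoped ENNReal NNReal

noncomputable section

/-- The upper half-plane `𝓗`. -/
def UHP : Set ℂ := {z : ℂ | 0 < z.im}

/-- The Carleson box `Q_I` over the bounded interval `I = [a, b)`. -/
def Box (a b : ℝ) : Set ℂ := {z : ℂ | z.re ∈ Set.Ico a b ∧ z.im ∈ Set.Ioo 0 (b - a)}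

/-- The `ω`-mass of a set, `ω(S) = ∫_S ω dV`. -/
def wMass (ω : ℂ → ℝ≥0∞) (S : Set ℂ) : ℝ≥0∞ := ∫⁻ z in S, ω z

/-- The Békollé–Bonami constant `[ω]_{B_p}`. -/
def BBconst (ω : ℂ → ℝ≥0∞) (p : ℝ) : ℝ≥0∞ :=
  ⨆ (a : ℝ) (b : ℝ) (_ : a < b),
    ((volume (Box a b))⁻¹ * wMass ω (Box a b)) *
      ((volume (Box a b))⁻¹ * ∫⁻ z in Box a b, ω z ^ (1 - p / (p - 1))) ^ (p - 1)

/-- `K_μ(z) = sup { μ(Q_I)/ω(Q_I) : I ⊂ ℝ a bounded interval with z ∈ Q_I }`. -/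
def Kmu (ω : ℂ → ℝ≥0∞) (μ : Measure ℂ) (z : ℂ) : ℝ≥0∞ :=
  ⨆ (a : ℝ) (b : ℝ) (_ : a < b) (_ : z ∈ Box a b), μ (Box a b) / wMass ω (Box a b)

/-- The Carleson box over the interval `2^j([0,1) + m + (-1)^j β)` of the grid `D^β`. -/
def dBoxB (β : ℝ) (j m : ℤ) : Set ℂ :=
  Box ((2 : ℝ) ^ j * ((m : ℝ) + (-1 : ℝ) ^ j * β))
    ((2 : ℝ) ^ j * ((m : ℝ) + 1 + (-1 : ℝ) ^ j * β))

/-- `K^β_{d,μ}(z) = sup { μ(Q_I)/ω(Q_I) : I ∈ D^β with z ∈ Q_I }`. -/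
def KmuDB (β : ℝ) (ω : ℂ → ℝ≥0∞) (μ : Measure ℂ) (z : ℂ) : ℝ≥0∞ :=
  ⨆ (j : ℤ) (m : ℤ) (_ : z ∈ dBoxB β j m), μ (dBoxB β j m) / wMass ω (dBoxB β j m)

lemma box_eq (a b : ℝ) :
    Box a b = Complex.measurableEquivRealProd ⁻¹' (Set.Ico a b ×ˢ Set.Ioo 0 (b - a)) := by
  ext z
  simp [Box, Set.mem_prod]

lemma volume_box (a b : ℝ) :
    volume (Box a b) = ENNReal.ofReal (b - a) * ENNReal.ofReal (b - a) := by
  rw [box_eq, Complex.volume_preserving_equiv_real_prod.measure_preimage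
    ((measurableSet_Ico.prod measurableSet_Ioo).nullMeasurableSet)]
  rw [MeasureTheory.Measure.volume_eq_prod, Measure.prod_prod, Real.volume_Ico,
    Real.volume_Ioo, sub_zero]

lemma box_subset {a b a' b' : ℝ} (h1 : a' ≤ a) (h2 : b ≤ b') : Box a b ⊆ Box a' b' := by
  rintro z ⟨⟨hre1, hre2⟩, him1, him2⟩
  exact ⟨⟨le_trans h1 hre1, lt_of_lt_of_le hre2 h2⟩, him1, by linarith⟩

lemma third_trick {a b : ℝ} (hab : a < b) :
    ∃ (β : ℝ) (j m : ℤ), (β = 0 ∨ β = 1/3) ∧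
      (2:ℝ)^j * ((m:ℝ) + (-1:ℝ)^j * β) ≤ a ∧ b ≤ (2:ℝ)^j * ((m:ℝ) + 1 + (-1:ℝ)^j * β) ∧
      (2:ℝ)^j ≤ 6 * (b - a) := by
  obtain ⟨n, hn1, hn2⟩ := exists_mem_Ioc_zpow (by linarith : (0:ℝ) < 3*(b-a)) one_lt_two
  set j : ℤ := n + 1 with hj
  have hpow : (0:ℝ) < (2:ℝ)^j := zpow_pos (by norm_num) _
  have h3 : 3*(b-a) ≤ (2:ℝ)^j := hn2
  have h6 : (2:ℝ)^j ≤ 6*(b-a) := by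
    have h2 : (2:ℝ)^j = 2^n * 2 := zpow_add_one₀ two_ne_zero n
    have := hn1
    nlinarith
  set ε : ℝ := (-1:ℝ)^j with hε
  have hεval : ε = 1 ∨ ε = -1 := by
    rcases Int.even_or_odd j with h | h
    · exact Or.inl (h.neg_one_zpow)
    · exact Or.inr (h.neg_one_zpow)
  have hcand : ∀ s : ℝ, ∃ m : ℤ, (2:ℝ)^j * ((m:ℝ) + s) ≤ a ∧ a < (2:ℝ)^j * ((m:ℝ) + 1 + s) := by
    intro s
    refine ⟨⌊a / 2^j - s⌋, ?_, ?_⟩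
    · have h := Int.floor_le (a / 2^j - s)
      have : ((⌊a / 2^j - s⌋ : ℝ) + s) ≤ a / 2^j := by linarith
      calc (2:ℝ)^j * ((⌊a / 2^j - s⌋ : ℝ) + s) ≤ 2^j * (a / 2^j) := by
            exact mul_le_mul_of_nonneg_left this hpow.le
        _ = a := by field_simp
    · have h := Int.lt_floor_add_one (a / 2^j - s)
      have h' : a / 2^j < ((⌊a / 2^j - s⌋ : ℝ) + 1 + s) := by linarith
      calc a = 2^j * (a / 2^j) := by field_simp
        _ < 2^j * ((⌊a / 2^j - s⌋ : ℝ) + 1 + s) := by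
            exact mul_lt_mul_of_pos_left h' hpow
  obtain ⟨m0, hL0, hR0⟩ := hcand (ε * 0)
  obtain ⟨m1, hL1, hR1⟩ := hcand (ε * (1/3))
  by_cases hb0 : b ≤ (2:ℝ)^j * ((m0:ℝ) + 1 + ε * 0)
  · exact ⟨0, j, m0, Or.inl rfl, hL0, hb0, h6⟩
  by_cases hb1 : b ≤ (2:ℝ)^j * ((m1:ℝ) + 1 + ε * (1/3))
  · exact ⟨1/3, j, m1, Or.inr rfl, hL1, hb1, h6⟩
  exfalso
  push_neg at hb0 hb1
  set R0 : ℝ := (2:ℝ)^j * ((m0:ℝ) + 1 + ε * 0) with hR0def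
  set R1 : ℝ := (2:ℝ)^j * ((m1:ℝ) + 1 + ε * (1/3)) with hR1def
  have hdlt : |R0 - R1| < b - a := abs_sub_lt_iff.2 ⟨by linarith, by linarith⟩
  have hdiff : R0 - R1 = (2:ℝ)^j * (((m0:ℝ) - m1) - ε/3) := by
    rw [hR0def, hR1def]; ring
  have habs : (2:ℝ)^j * (1/3) ≤ |R0 - R1| := by
    rw [hdiff, abs_mul, abs_of_pos hpow]
    have hone : (1:ℝ) ≤ 3 * |((m0:ℝ) - m1) - ε/3| := by
      have key : ∀ c : ℤ, (c:ℝ) = ε → (1:ℝ) ≤ 3 * |((m0:ℝ) - m1) - ε/3| := by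
        intro c hc
        have hcval : c = 1 ∨ c = -1 := by
          rcases hεval with h1 | h1
          · left; exact_mod_cast hc.trans h1
          · right; exact_mod_cast hc.trans h1
        have hz : (3*(m0 - m1) - c : ℤ) ≠ 0 := by omega
        have h1 : (1:ℤ) ≤ |3*(m0 - m1) - c| := Int.one_le_abs hz
        have h1' : (1:ℝ) ≤ |3*((m0:ℝ) - m1) - c| := by exact_mod_cast h1
        have h2 : (3:ℝ)*((m0:ℝ) - m1) - c = 3 * (((m0:ℝ) - m1) - ε/3) := by
          rw [← hc]; ring
        rw [h2, abs_mul, abs_of_pos (by norm_num : (0:ℝ) < 3)] at h1'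
        exact h1'
      rcases hεval with h1 | h1
      · exact key 1 (by rw [h1]; norm_num)
      · exact key (-1) (by rw [h1]; norm_num)
    nlinarith [abs_nonneg (((m0:ℝ) - m1) - ε/3)]
  nlinarith

lemma key_mass (p : ℝ) (hp : 1 < p) (ω : ℂ → ℝ≥0∞) (hω : Measurable ω)
    (hBp : BBconst ω p < ⊤) {a b a' b' : ℝ} (hab : a < b) (hab' : a' < b')
    (hsub : Box a b ⊆ Box a' b') (hlen : b' - a' ≤ 6 * (b - a)) :
    wMass ω (Box a' b') ≤ (1 + BBconst ω p * (36 : ℝ≥0∞) ^ p) * wMass ω (Box a b) := by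
  set W := BBconst ω p with hW
  set r : ℝ := 1 - p / (p - 1) with hrdef
  have hp0 : (0:ℝ) < p := by linarith
  have hp1 : (0:ℝ) < p - 1 := by linarith
  have hr : r < 0 := by
    rw [hrdef]
    have : 1 < p / (p - 1) := (one_lt_div hp1).2 (by linarith)
    linarith
  set B := Box a b with hB
  set B' := Box a' b' with hB'
  set S : ℝ≥0∞ := ∫⁻ z in B', ω z ^ r with hSdef
  set vB : ℝ≥0∞ := volume B with hvB
  set vB' : ℝ≥0∞ := volume B' with hvB'
  have hvB_eq : vB = ENNReal.ofReal (b - a) * ENNReal.ofReal (b - a) := volume_box a b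
  have hvB'_eq : vB' = ENNReal.ofReal (b' - a') * ENNReal.ofReal (b' - a') := volume_box a' b'
  have hofr : ∀ x y : ℝ, x < y → ENNReal.ofReal (y - x) * ENNReal.ofReal (y - x) ≠ 0 := by
    intro x y hxy
    rw [mul_ne_zero_iff]
    constructor <;> · simp only [ne_eq, ENNReal.ofReal_eq_zero, not_le]; linarith
  have hvB0 : vB ≠ 0 := by rw [hvB_eq]; exact hofr _ _ hab
  have hvBt : vB ≠ ∞ := by rw [hvB_eq]; exact (ENNReal.mul_lt_top ENNReal.ofReal_lt_top ENNReal.ofReal_lt_top).ne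
  have hvB'0 : vB' ≠ 0 := by rw [hvB'_eq]; exact hofr _ _ hab'
  have hvB't : vB' ≠ ∞ := by
    rw [hvB'_eq]; exact (ENNReal.mul_lt_top ENNReal.ofReal_lt_top ENNReal.ofReal_lt_top).ne
  have hvBp0 : vB ^ p ≠ 0 := (ENNReal.rpow_pos (pos_iff_ne_zero.2 hvB0) hvBt).ne'
  have hvBpt : vB ^ p ≠ ∞ := ENNReal.rpow_ne_top_of_nonneg hp0.le hvBt
  have hvB'p0 : vB' ^ p ≠ 0 := (ENNReal.rpow_pos (pos_iff_ne_zero.2 hvB'0) hvB't).ne'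
  have hvB'pt : vB' ^ p ≠ ∞ := ENNReal.rpow_ne_top_of_nonneg hp0.le hvB't
  -- the B_p control on the big box
  have hBB : (vB'⁻¹ * wMass ω B') * (vB'⁻¹ * S) ^ (p - 1) ≤ W := by
    rw [hW, BBconst]
    exact le_iSup_of_le a' (le_iSup_of_le b' (le_iSup_of_le hab' le_rfl))
  have hX : wMass ω B' * S ^ (p - 1) ≤ vB' ^ p * W := by
    have hsplit : vB' ^ p = vB' * vB' ^ (p - 1) := by
      have h : vB' ^ p = vB' ^ (1 + (p - 1)) := by norm_num
      rw [h, ENNReal.rpow_add _ _ hvB'0 hvB't, ENNReal.rpow_one]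
    have hrw : (vB'⁻¹ * wMass ω B') * (vB'⁻¹ * S) ^ (p - 1)
        = (vB' ^ p)⁻¹ * (wMass ω B' * S ^ (p - 1)) := by
      rw [ENNReal.mul_rpow_of_nonneg _ _ (by linarith : (0:ℝ) ≤ p - 1),
        ENNReal.inv_rpow, hsplit,
        ENNReal.mul_inv (Or.inl hvB'0) (Or.inl hvB't)]
      ring
    calc wMass ω B' * S ^ (p - 1)
        = vB' ^ p * ((vB' ^ p)⁻¹ * (wMass ω B' * S ^ (p - 1))) := by
          rw [← mul_assoc, ENNReal.mul_inv_cancel hvB'p0 hvB'pt, one_mul]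
      _ ≤ vB' ^ p * W := mul_le_mul_right (hrw ▸ hBB) _
  -- if S = ∞ then the big mass vanishes
  have hS_top : S = ∞ → wMass ω B' = 0 := by
    intro hS
    by_contra hne
    rw [hS, ENNReal.top_rpow_of_pos (by linarith : (0:ℝ) < p - 1),
      ENNReal.mul_top hne] at hX
    exact absurd (hX.trans_lt (ENNReal.mul_lt_top hvB'pt.lt_top hBp)) (lt_irrefl ⊤)
  rcases eq_or_ne (wMass ω B) ∞ with hT | hT
  · rw [hT, ENNReal.mul_top (by simp : (1:ℝ≥0∞) + W * 36 ^ p ≠ 0)]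
    exact le_top
  rcases eq_or_ne (wMass ω B) 0 with hZ | hZ
  · have hS : S = ∞ := by
      have h0 : ω =ᵐ[volume.restrict B] 0 := (lintegral_eq_zero_iff hω).1 hZ
      have hInf : (∫⁻ z in B, ω z ^ r) = ∞ := by
        have : (∫⁻ z in B, ω z ^ r) = ∫⁻ _ in B, (⊤:ℝ≥0∞) := by
          refine lintegral_congr_ae (h0.mono fun z hz => ?_)
          rw [Pi.zero_apply] at hz
          show ω z ^ r = (⊤:ℝ≥0∞)
          rw [hz, ENNReal.zero_rpow_of_neg hr]
        rw [this, setLIntegral_const]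
        exact ENNReal.top_mul hvB0
      exact top_le_iff.1 (hInf ▸ lintegral_mono_set hsub)
    rw [hS_top hS]
    exact zero_le
  rcases eq_or_ne S ∞ with hS | hS
  · rw [hS_top hS]; exact zero_le
  -- main Hölder case
  have hSB : (∫⁻ z in B, ω z ^ r) ≠ ∞ := by
    intro h
    exact hS (top_le_iff.1 (h ▸ lintegral_mono_set hsub))
  have hae1 : ∀ᵐ z ∂(volume.restrict B), ω z ≠ ⊤ :=
    (ae_lt_top hω hT).mono fun z h => h.ne
  have hae2 : ∀ᵐ z ∂(volume.restrict B), ω z ≠ 0 := by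
    refine (ae_lt_top (hω.pow_const r) hSB).mono fun z h => ?_
    intro h0
    rw [h0, ENNReal.zero_rpow_of_neg hr] at h
    exact absurd h (lt_irrefl ⊤)
  set q : ℝ := p / (p - 1) with hq
  have hpq : p.HolderConjugate q := Real.HolderConjugate.conjExponent hp
  have hq0 : q ≠ 0 := by positivity
  have hone : (fun _ : ℂ => (1:ℝ≥0∞)) =ᵐ[volume.restrict B]
      (fun z => ω z ^ (1/p)) * (fun z => ω z ^ (-(1/p))) := by
    filter_upwards [hae1, hae2] with z h1 h2
    rw [Pi.mul_apply, ← ENNReal.rpow_add _ _ h2 h1]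
    simp
  have hH := ENNReal.lintegral_mul_le_Lp_mul_Lq (volume.restrict B) hpq
    ((hω.pow_const (1/p)).aemeasurable) ((hω.pow_const (-(1/p))).aemeasurable)
  have hfp : ∀ z : ℂ, (ω z ^ (1/p)) ^ p = ω z := by
    intro z
    rw [← ENNReal.rpow_mul, one_div, inv_mul_cancel₀ hp0.ne', ENNReal.rpow_one]
  have hgq : ∀ z : ℂ, (ω z ^ (-(1/p))) ^ q = ω z ^ r := by
    intro z
    rw [← ENNReal.rpow_mul]
    congr 1
    rw [hrdef, hq]
    field_simp
    ring
  have hH' : vB ≤ (wMass ω B) ^ (1/p) * (∫⁻ z in B, ω z ^ r) ^ (1/q) := by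
    have hv1 : vB = ∫⁻ z in B, ((fun z => ω z ^ (1/p)) * (fun z => ω z ^ (-(1/p)))) z := by
      rw [← lintegral_congr_ae hone, setLIntegral_const, one_mul]
    rw [hv1]
    refine hH.trans (le_of_eq ?_)
    congr 1
    · congr 1
      exact lintegral_congr fun z => by rw [hfp]
    · congr 1
      exact lintegral_congr fun z => by rw [hgq]
  have h1' : vB ^ p ≤ wMass ω B * S ^ (p - 1) := by
    calc vB ^ p ≤ ((wMass ω B) ^ (1/p) * (∫⁻ z in B, ω z ^ r) ^ (1/q)) ^ p :=
          ENNReal.rpow_le_rpow hH' hp0.le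
      _ = wMass ω B * (∫⁻ z in B, ω z ^ r) ^ (p - 1) := by
          rw [ENNReal.mul_rpow_of_nonneg _ _ hp0.le, ← ENNReal.rpow_mul, ← ENNReal.rpow_mul]
          congr 2
          · rw [one_div, inv_mul_cancel₀ hp0.ne', ENNReal.rpow_one]
          · rw [hq]; field_simp
      _ ≤ wMass ω B * S ^ (p - 1) := by
          exact mul_le_mul_right (ENNReal.rpow_le_rpow (lintegral_mono_set hsub)
            (by linarith)) _
  have hSp0 : S ^ (p - 1) ≠ 0 := by
    intro h
    rw [h, mul_zero] at h1'
    exact hvBp0 (le_antisymm h1' zero_le : vB ^ p = 0)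
  have hSpt : S ^ (p - 1) ≠ ∞ := ENNReal.rpow_ne_top_of_nonneg (by linarith) hS
  -- multiply and cancel
  have hmul : (wMass ω B' * vB ^ p) * S ^ (p - 1)
      ≤ ((vB' ^ p * W) * wMass ω B) * S ^ (p - 1) := by
    calc (wMass ω B' * vB ^ p) * S ^ (p - 1)
        = (wMass ω B' * S ^ (p - 1)) * (vB ^ p) := by ring
      _ ≤ (vB' ^ p * W) * (wMass ω B * S ^ (p - 1)) := mul_le_mul' hX h1'
      _ = ((vB' ^ p * W) * wMass ω B) * S ^ (p - 1) := by ring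
  have hcanc : wMass ω B' * vB ^ p ≤ (vB' ^ p * W) * wMass ω B :=
    (ENNReal.mul_le_mul_iff_left hSp0 hSpt).1 hmul
  -- volume comparison
  have hvle : vB' ≤ 36 * vB := by
    rw [hvB_eq, hvB'_eq]
    have h6 : ENNReal.ofReal (b' - a') ≤ ENNReal.ofReal (6 * (b - a)) :=
      ENNReal.ofReal_le_ofReal hlen
    calc ENNReal.ofReal (b' - a') * ENNReal.ofReal (b' - a')
        ≤ ENNReal.ofReal (6 * (b - a)) * ENNReal.ofReal (6 * (b - a)) := mul_le_mul' h6 h6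
      _ = 36 * (ENNReal.ofReal (b - a) * ENNReal.ofReal (b - a)) := by
          rw [ENNReal.ofReal_mul (by norm_num : (0:ℝ) ≤ 6)]
          rw [show ((36:ℝ≥0∞)) = ENNReal.ofReal 6 * ENNReal.ofReal 6 by
            rw [← ENNReal.ofReal_mul (by norm_num : (0:ℝ) ≤ 6)]
            norm_num]
          ring
  have hvple : vB' ^ p ≤ 36 ^ p * vB ^ p := by
    calc vB' ^ p ≤ (36 * vB) ^ p := ENNReal.rpow_le_rpow hvle hp0.le
      _ = 36 ^ p * vB ^ p := ENNReal.mul_rpow_of_nonneg _ _ hp0.le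
  have hfinal : wMass ω B' * vB ^ p ≤ ((1 + W * 36 ^ p) * wMass ω B) * vB ^ p := by
    refine hcanc.trans ?_
    calc (vB' ^ p * W) * wMass ω B ≤ ((36 ^ p * vB ^ p) * W) * wMass ω B := by
          exact mul_le_mul_left (mul_le_mul_left hvple _) _
      _ = ((W * 36 ^ p) * wMass ω B) * vB ^ p := by ring
      _ ≤ ((1 + W * 36 ^ p) * wMass ω B) * vB ^ p := by
          exact mul_le_mul_left (mul_le_mul_left le_add_self _) _
  exact (ENNReal.mul_le_mul_iff_left hvBp0 hvBpt).1 hfinal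

/-- For `1 < p < ∞`, `ω ∈ B_p` and a positive Borel measure `μ` on `𝓗`, the function
`K_μ` is pointwise dominated, up to a constant depending only on `p` and `[ω]_{B_p}`,
by the sum of its dyadic counterparts over the grids `D^0` and `D^{1/3}`. -/
theorem Kmu_le_sum_dyadic_Kmu (p : ℝ) (hp : 1 < p)
    (ω : ℂ → ℝ≥0∞) (hω : Measurable ω) (hBp : BBconst ω p < ⊤) (μ : Measure ℂ) :
    ∃ C : ℝ≥0∞, 0 < C ∧ C < ⊤ ∧ ∀ z ∈ UHP,
      Kmu ω μ z ≤ C * (KmuDB 0 ω μ z + KmuDB (1 / 3) ω μ z) := by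
  have hC0 : (1:ℝ≥0∞) + BBconst ω p * (36:ℝ≥0∞) ^ p ≠ 0 := by simp
  have hCt : (1:ℝ≥0∞) + BBconst ω p * (36:ℝ≥0∞) ^ p ≠ ⊤ := by
    refine (ENNReal.add_lt_top.2 ⟨ENNReal.one_lt_top, ENNReal.mul_lt_top hBp
      (ENNReal.rpow_lt_top_of_nonneg (by linarith) (by norm_num))⟩).ne
  refine ⟨1 + BBconst ω p * (36:ℝ≥0∞) ^ p, pos_iff_ne_zero.2 hC0, hCt.lt_top, ?_⟩
  intro z _
  refine iSup_le fun a => iSup_le fun b => iSup_le fun hab => iSup_le fun hzB => ?_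
  obtain ⟨β, j, m, hβ, hL, hR, hlen⟩ := third_trick hab
  have hpow : (0:ℝ) < (2:ℝ)^j := zpow_pos (by norm_num) _
  set a' : ℝ := (2:ℝ)^j * ((m:ℝ) + (-1:ℝ)^j * β) with ha'
  set b' : ℝ := (2:ℝ)^j * ((m:ℝ) + 1 + (-1:ℝ)^j * β) with hb'
  have hab' : a' < b' := by rw [ha', hb']; nlinarith
  have hsub : Box a b ⊆ Box a' b' := box_subset hL hR
  have hlen' : b' - a' ≤ 6 * (b - a) := by
    have h : b' - a' = (2:ℝ)^j := by rw [ha', hb']; ring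
    rw [h]; exact hlen
  have hkey := key_mass p hp ω hω hBp hab hab' hsub hlen'
  have hdiv : μ (Box a b) / wMass ω (Box a b)
      ≤ (1 + BBconst ω p * (36:ℝ≥0∞) ^ p) * (μ (Box a' b') / wMass ω (Box a' b')) := by
    set C : ℝ≥0∞ := 1 + BBconst ω p * (36:ℝ≥0∞) ^ p with hC
    have hinv : (wMass ω (Box a b))⁻¹ ≤ C * (wMass ω (Box a' b'))⁻¹ := by
      have h1 : (C * wMass ω (Box a b))⁻¹ ≤ (wMass ω (Box a' b'))⁻¹ :=
        ENNReal.inv_le_inv.2 hkey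
      calc (wMass ω (Box a b))⁻¹
          = C * (C * wMass ω (Box a b))⁻¹ := by
            rw [ENNReal.mul_inv (Or.inl hC0) (Or.inl hCt), ← mul_assoc,
              ENNReal.mul_inv_cancel hC0 hCt, one_mul]
        _ ≤ C * (wMass ω (Box a' b'))⁻¹ := mul_le_mul_right h1 _
    calc μ (Box a b) / wMass ω (Box a b)
        ≤ μ (Box a' b') * (wMass ω (Box a b))⁻¹ := by
          rw [div_eq_mul_inv]; exact mul_le_mul_left (measure_mono hsub) _
      _ ≤ μ (Box a' b') * (C * (wMass ω (Box a' b'))⁻¹) := mul_le_mul_right hinv _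
      _ = C * (μ (Box a' b') / wMass ω (Box a' b')) := by rw [div_eq_mul_inv]; ring
  have hzD : z ∈ dBoxB β j m := hsub hzB
  have hKd : μ (dBoxB β j m) / wMass ω (dBoxB β j m) ≤ KmuDB β ω μ z :=
    le_iSup_of_le j (le_iSup_of_le m (le_iSup_of_le hzD le_rfl))
  calc μ (Box a b) / wMass ω (Box a b)
      ≤ (1 + BBconst ω p * (36:ℝ≥0∞) ^ p) * (μ (dBoxB β j m) / wMass ω (dBoxB β j m)) := hdiv
    _ ≤ (1 + BBconst ω p * (36:ℝ≥0∞) ^ p) * KmuDB β ω μ z := mul_le_mul_right hKd _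
    _ ≤ (1 + BBconst ω p * (36:ℝ≥0∞) ^ p) * (KmuDB 0 ω μ z + KmuDB (1/3) ω μ z) := by
        refine mul_le_mul_right ?_ _
        rcases hβ with h | h
        · rw [h]; exact le_self_add
        · rw [h]; exact le_add_self
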